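/- arXiv:1602.01590 — 7 statements merged into one kernel-verified Lean document; each statement's English description precedes it below -/
import Mathlib

section
/- If S is a proper subalgebra of a (not necessarily associative) algebra A with dim A > 1 over a field F, and A = S + Ann(A) where Ann(A) = {x ∈ A : xA = Ax = 0}, then A is decomposable, i.e., A is a direct sum of two nonzero ideals. -/
/-- The multiplication of a (not necessarily associative) `F`-algebra structure on `A`,
given as a bilinear map. -/
abbrev Mul2 (F A : Type*) [Field F] [AddCommGroup A] [Module F A] :=
  A →ₗ[F] A →ₗ[F] A

variable {F A : Type*} [Field F] [AddCommGroup A] [Module F A]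

/-- A submodule is an ideal if it absorbs multiplication on both sides. -/
def IsIdeal (m : Mul2 F A) (I : Submodule F A) : Prop :=
  ∀ x ∈ I, ∀ y : A, m x y ∈ I ∧ m y x ∈ I

/-- An algebra is decomposable if it is the direct sum of two nonzero ideals. -/
def Decomposable (m : Mul2 F A) : Prop :=
  ∃ I J : Submodule F A, IsIdeal m I ∧ IsIdeal m J ∧ I ≠ ⊥ ∧ J ≠ ⊥ ∧
    I ⊓ J = ⊥ ∧ I ⊔ J = ⊤

/-- The set of `x` with `x A ⊆ N` and `A x ⊆ N`, as a submodule. -/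
def annOver (m : Mul2 F A) (N : Submodule F A) : Submodule F A where
  carrier := {x | ∀ y : A, m x y ∈ N ∧ m y x ∈ N}
  add_mem' := by
    intro a b ha hb y
    constructor
    · simpa using N.add_mem (ha y).1 (hb y).1
    · simpa using N.add_mem (ha y).2 (hb y).2
  zero_mem' := by intro y; simp
  smul_mem' := by
    intro c a ha y
    constructor
    · simpa using N.smul_mem c (ha y).1
    · simpa using N.smul_mem c (ha y).2

/-- The annihilator `{x | xA = Ax = 0}`. -/
def annA (m : Mul2 F A) : Submodule F A := annOver m ⊥

/-- The upper annihilating series: `Ann⁰ = 0`, `Annⁱ/Annⁱ⁻¹ = Ann(A/Annⁱ⁻¹)`. -/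
def annSeries (m : Mul2 F A) : ℕ → Submodule F A
  | 0 => ⊥
  | (k+1) => annOver m (annSeries m k)

/-- The span of all products of elements of `I` with elements of `J`. -/
def mulSub (m : Mul2 F A) (I J : Submodule F A) : Submodule F A :=
  Submodule.span F {z | ∃ x ∈ I, ∃ y ∈ J, z = m x y}

/-- `A²`, the span of all products. -/
def sqA (m : Mul2 F A) : Submodule F A := mulSub m ⊤ ⊤

/-- Right powers: `rpow 0 = A = A^{<1>}`, `rpow (k+1) = (rpow k) · A`. -/
def rpow (m : Mul2 F A) : ℕ → Submodule F A
  | 0 => ⊤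
  | (k+1) => mulSub m (rpow m k) ⊤

/-- Full powers: `apow 0 = A = A¹`, `apow (k+1) = Σ_{i+j=k} (apow i)(apow j)`,
i.e. `A^{k+2} = Σ_{i=1}^{k+1} Aⁱ A^{k+2-i}`. -/
def apow (m : Mul2 F A) : ℕ → Submodule F A
  | 0 => ⊤
  | (k+1) => ⨆ i : Fin (k+1), mulSub m (apow m i.1) (apow m (k - i.1))
  decreasing_by
  · exact i.2
  · exact Nat.lt_succ_of_le (Nat.sub_le _ _)

/-- `A` is nilpotent: `Aⁿ = 0` for some `n`. -/
def IsNilpotentAlg (m : Mul2 F A) : Prop := ∃ n, apow m n = ⊥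

/-- `A` is right nilpotent: `A^{<n>} = 0` for some `n`. -/
def IsRightNilpotentAlg (m : Mul2 F A) : Prop := ∃ n, rpow m n = ⊥

/-- A basis is natural if products of distinct basis vectors vanish. -/
def NaturalBasis (m : Mul2 F A) {ι : Type*} (bs : Module.Basis ι F A) : Prop :=
  ∀ i j, i ≠ j → m (bs i) (bs j) = 0

/-- An evolution algebra: commutative with some finite natural basis. -/
def IsEvolutionAlg (m : Mul2 F A) : Prop :=
  (∀ x y, m x y = m y x) ∧
  ∃ (ι : Type) (_ : Fintype ι) (bs : Module.Basis ι F A), NaturalBasis m bs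

/-- The set of `x` with `x N = 0`, as a submodule. -/
def annIn (m : Mul2 F A) (N : Submodule F A) : Submodule F A where
  carrier := {x | ∀ y ∈ N, m x y = 0}
  add_mem' := by
    intro a b ha hb y hy
    simp [ha y hy, hb y hy]
  zero_mem' := by intro y hy; simp
  smul_mem' := by
    intro c a ha y hy
    simp [ha y hy]


/-- If `S` is a proper subalgebra of `A`, `dim A > 1`, and `A = S + Ann(A)`,
then `A` is decomposable. -/
theorem stmt0 {F A : Type*} [Field F] [AddCommGroup A] [Module F A]
    (m : Mul2 F A) (hdim : 1 < Module.rank F A)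
    (S : Submodule F A) (hclosed : ∀ x ∈ S, ∀ y ∈ S, m x y ∈ S)
    (hproper : S ≠ ⊤) (hsum : S ⊔ annA m = ⊤) :
    Decomposable m := by
  classical
  have hann : ∀ x ∈ annA m, ∀ y : A, m x y = 0 ∧ m y x = 0 := by
    intro x hx y
    have h := hx y
    simpa [Submodule.mem_bot] using h
  by_cases hS : S = ⊥
  · -- A = Ann(A), multiplication is zero
    have hNtop : annA m = ⊤ := by rwa [hS, bot_sup_eq] at hsum
    have hzero : ∀ x y : A, m x y = 0 := fun x y =>
      (hann x (hNtop ▸ Submodule.mem_top) y).1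
    have : Nontrivial A := by
      rw [← rank_pos_iff_nontrivial (R := F)]
      exact lt_trans one_pos hdim
    obtain ⟨x, hx⟩ := exists_ne (0 : A)
    obtain ⟨J, hJ⟩ := Submodule.exists_isCompl (Submodule.span F {x})
    refine ⟨Submodule.span F {x}, J, ?_, ?_, ?_, ?_, hJ.disjoint.eq_bot, hJ.codisjoint.eq_top⟩
    · intro a _ y
      constructor <;> simp [hzero]
    · intro a _ y
      constructor <;> simp [hzero]
    · simpa [Submodule.span_singleton_eq_bot] using hx
    · intro hJbot
      rw [hJbot] at hJ
      have htop : Submodule.span F {x} = ⊤ := by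
        simpa using hJ.codisjoint.eq_top
      have h1 : Module.rank F A ≤ 1 := by
        have := rank_span_le (R := F) ({x} : Set A)
        rw [htop] at this
        simpa using this
      exact absurd hdim (not_lt.mpr h1)
  · -- S ≠ ⊥: find complement C of S ⊓ Ann inside Ann
    set N := annA m with hN
    obtain ⟨Q, hQ⟩ := Submodule.exists_isCompl ((S ⊓ N).comap N.subtype)
    set C := Q.map N.subtype with hC
    have hCN : C ≤ N := by
      rw [hC]
      exact Submodule.map_subtype_le N Q
    have hmap : Submodule.map N.subtype ((S ⊓ N).comap N.subtype) = S ⊓ N := by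
      rw [Submodule.map_comap_subtype]
      exact inf_eq_right.mpr inf_le_right
    have hdisj : S ⊓ C = ⊥ := by
      have h1 : (S ⊓ N) ⊓ C = ⊥ := by
        rw [← hmap, hC, ← Submodule.map_inf _ (Submodule.injective_subtype N),
          hQ.disjoint.eq_bot, Submodule.map_bot]
      calc S ⊓ C = (S ⊓ N) ⊓ C := by
            rw [inf_assoc, inf_eq_right.mpr hCN]
        _ = ⊥ := h1
    have hsup : S ⊔ C = ⊤ := by
      have h1 : (S ⊓ N) ⊔ C = N := by
        rw [← hmap, hC, ← Submodule.map_sup, hQ.codisjoint.eq_top, Submodule.map_top,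
          Submodule.range_subtype]
      calc S ⊔ C = S ⊔ ((S ⊓ N) ⊔ C) := by
            rw [← sup_assoc, sup_inf_self]
        _ = S ⊔ N := by rw [h1]
        _ = ⊤ := hsum
    refine ⟨S, C, ?_, ?_, hS, ?_, hdisj, hsup⟩
    · -- S is an ideal
      intro x hx y
      have hy : y ∈ S ⊔ N := by rw [hsum]; exact Submodule.mem_top
      obtain ⟨s, hs, n, hn, rfl⟩ := Submodule.mem_sup.mp hy
      constructor
      · have : m x (s + n) = m x s := by
          simp [(hann n hn x).2]
        rw [this]; exact hclosed x hx s hs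
      · have : m (s + n) x = m s x := by
          simp [(hann n hn x).1]
        rw [this]; exact hclosed s hs x hx
    · -- C is an ideal (C ⊆ Ann)
      intro x hx y
      obtain ⟨h1, h2⟩ := hann x (hCN hx) y
      rw [h1, h2]
      exact ⟨C.zero_mem, C.zero_mem⟩
    · -- C ≠ ⊥
      intro hCbot
      rw [hCbot, sup_bot_eq] at hsup
      exact hproper hsup
end

section
/- A finite-dimensional commutative nonassociative algebra is nilpotent if and only if it is right nilpotent, where right nilpotency means A^{<n>} = 0 for some n with A^{<1>} = A and A^{<k+1>} = A^{<k>}A, and nilpotency means Aⁿ = 0 for some n with A¹ = A and A^{k+1} = Σ_{i=1}^{k} Aⁱ A^{k+1-i}. -/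
variable {F A : Type*} [Field F] [AddCommGroup A] [Module F A]

lemma mulSub_le_iff {m : Mul2 F A} {I J N : Submodule F A} :
    mulSub m I J ≤ N ↔ ∀ x ∈ I, ∀ y ∈ J, m x y ∈ N := by
  rw [mulSub, Submodule.span_le]
  constructor
  · intro h x hx y hy; exact h ⟨x, hx, y, hy, rfl⟩
  · rintro h z ⟨x, hx, y, hy, rfl⟩; exact h x hx y hy

lemma mem_mulSub {m : Mul2 F A} {I J : Submodule F A} {x y : A}
    (hx : x ∈ I) (hy : y ∈ J) : m x y ∈ mulSub m I J :=
  Submodule.subset_span ⟨x, hx, y, hy, rfl⟩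

lemma mulSub_mono {m : Mul2 F A} {I I' J J' : Submodule F A}
    (hI : I ≤ I') (hJ : J ≤ J') : mulSub m I J ≤ mulSub m I' J' :=
  mulSub_le_iff.2 fun x hx y hy => mem_mulSub (hI hx) (hJ hy)

lemma mulSub_comm {m : Mul2 F A} (hcomm : ∀ x y, m x y = m y x)
    (I J : Submodule F A) : mulSub m I J = mulSub m J I := by
  apply le_antisymm <;>
    exact mulSub_le_iff.2 fun x hx y hy => (hcomm x y ▸ mem_mulSub hy hx)

lemma rpow_succ_le (m : Mul2 F A) (k : ℕ) : rpow m (k+1) ≤ rpow m k := by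
  induction k with
  | zero => exact le_top
  | succ k ih => exact mulSub_mono ih le_rfl

lemma rpow_antitone (m : Mul2 F A) : Antitone (rpow m) :=
  antitone_nat_of_succ_le (rpow_succ_le m)

lemma apow_succ (m : Mul2 F A) (k : ℕ) :
    apow m (k+1) = ⨆ i : Fin (k+1), mulSub m (apow m i.1) (apow m (k - i.1)) := by
  rw [apow]

lemma apow_zero (m : Mul2 F A) : apow m 0 = ⊤ := by rw [apow]

lemma rpow_le_apow (m : Mul2 F A) (k : ℕ) : rpow m k ≤ apow m k := by
  induction k with
  | zero => rw [apow_zero]; exact le_top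
  | succ k ih =>
    rw [apow_succ]
    refine le_trans ?_ (le_iSup _ (⟨k, Nat.lt_succ_self k⟩ : Fin (k+1)))
    simp only [Nat.sub_self, apow_zero]
    exact mulSub_mono ih le_top

lemma apow_le_rpow (m : Mul2 F A) (hcomm : ∀ x y, m x y = m y x) (k : ℕ) :
    apow m k ≤ rpow m (Nat.log 2 (k+1)) := by
  induction k using Nat.strong_induction_on with
  | _ k ih =>
    match k with
    | 0 => simp [apow, rpow]
    | (k+1) =>
      rw [apow_succ]
      apply iSup_le
      intro i
      set a := max i.1 (k - i.1) with ha
      have ha1 : mulSub m (apow m i.1) (apow m (k - i.1)) ≤ mulSub m (apow m a) ⊤ := by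
        rcases le_total (k - i.1) i.1 with h | h
        · rw [ha, max_eq_left h]; exact mulSub_mono le_rfl le_top
        · rw [mulSub_comm hcomm, ha, max_eq_right h]; exact mulSub_mono le_rfl le_top
      have hak : a < k + 1 := by
        have : i.1 ≤ k := Nat.lt_succ_iff.1 i.2
        exact Nat.lt_succ_iff.2 (max_le this (Nat.sub_le _ _))
      have ha2 : apow m a ≤ rpow m (Nat.log 2 (a+1)) := ih a hak
      have ha3 : mulSub m (apow m a) ⊤ ≤ rpow m (Nat.log 2 (a+1) + 1) :=
        mulSub_mono ha2 le_rfl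
      refine le_trans ha1 (le_trans ha3 (rpow_antitone m ?_))
      -- need : Nat.log 2 (k+1+1) ≤ Nat.log 2 (a+1) + 1
      have h2a : k + 2 ≤ (a + 1) * 2 := by
        have h1 : i.1 ≤ k := Nat.lt_succ_iff.1 i.2
        have : k ≤ 2 * a := by
          calc k = i.1 + (k - i.1) := (Nat.add_sub_cancel' h1).symm
            _ ≤ a + a := Nat.add_le_add (le_max_left _ _) (le_max_right _ _)
            _ = 2 * a := (two_mul a).symm
        omega
      calc Nat.log 2 (k + 1 + 1) ≤ Nat.log 2 ((a + 1) * 2) :=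
            Nat.log_mono_right h2a
        _ = Nat.log 2 (a + 1) + 1 := Nat.log_mul_base one_lt_two (Nat.succ_ne_zero a)

/-- A finite-dimensional commutative nonassociative algebra is nilpotent
if and only if it is right nilpotent. -/
theorem stmt4 {F A : Type*} [Field F] [AddCommGroup A] [Module F A]
    [FiniteDimensional F A] (m : Mul2 F A) (hcomm : ∀ x y, m x y = m y x) :
    IsNilpotentAlg m ↔ IsRightNilpotentAlg m := by
  constructor
  · rintro ⟨n, hn⟩
    exact ⟨n, le_bot_iff.1 (hn ▸ rpow_le_apow m n)⟩
  · rintro ⟨n, hn⟩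
    refine ⟨2 ^ n - 1, le_bot_iff.1 ?_⟩
    have h1 : 2 ^ n - 1 + 1 = 2 ^ n := Nat.succ_pred_eq_of_pos (Nat.pow_pos two_pos)
    have := apow_le_rpow m hcomm (2 ^ n - 1)
    rwa [h1, Nat.log_pow one_lt_two, hn] at this
end

section
/- Let E be a finite-dimensional nilpotent evolution algebra with natural basis B. Then Ann²(E) = span{e ∈ B : e² ∈ Ann(E)}, where Ann²(E) is the second term of the upper annihilating series, i.e., Ann²(E)/Ann(E) = Ann(E/Ann(E)). -/
variable {F A : Type*} [Field F] [AddCommGroup A] [Module F A]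

lemma mem_annOver' {F A : Type*} [Field F] [AddCommGroup A] [Module F A]
    (m : Mul2 F A) (N : Submodule F A) (x : A) :
    x ∈ annOver m N ↔ ∀ y, m x y ∈ N ∧ m y x ∈ N := Iff.rfl

lemma mul_basis_eq {F A : Type*} [Field F] [AddCommGroup A] [Module F A]
    (m : Mul2 F A) {ι : Type*} [Fintype ι] (bs : Module.Basis ι F A)
    (hnat : NaturalBasis m bs) (x : A) (i : ι) :
    m x (bs i) = bs.repr x i • m (bs i) (bs i) := by
  conv_lhs => rw [← bs.sum_repr x]
  rw [map_sum, LinearMap.sum_apply]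
  rw [Finset.sum_eq_single i]
  · simp
  · intro j _ hj
    simp [hnat j i hj]
  · intro h; exact absurd (Finset.mem_univ i) h

/-- For a finite-dimensional nilpotent evolution algebra with natural basis `bs`,
`Ann²(E)` is the span of the basis vectors whose square lies in `Ann(E)`. -/
theorem stmt6 {F E : Type*} [Field F] [AddCommGroup E] [Module F E]
    [FiniteDimensional F E] (m : Mul2 F E) (hcomm : ∀ x y, m x y = m y x)
    (hnil : IsNilpotentAlg m)
    {ι : Type*} [Fintype ι] (bs : Module.Basis ι F E) (hnat : NaturalBasis m bs) :
    annSeries m 2 =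
      Submodule.span F (⇑bs '' {i | m (bs i) (bs i) ∈ annSeries m 1}) := by
  have h1 : annSeries m 1 = annOver m ⊥ := rfl
  apply le_antisymm
  · intro x hx
    have hx' : ∀ y, m x y ∈ annSeries m 1 := fun y => ((mem_annOver' m _ x).1 hx y).1
    rw [← bs.sum_repr x]
    apply Submodule.sum_mem
    intro i _
    rcases eq_or_ne (bs.repr x i) 0 with h | h
    · simp [h]
    · apply Submodule.smul_mem
      apply Submodule.subset_span
      refine ⟨i, ?_, rfl⟩
      have := hx' (bs i)
      rw [mul_basis_eq m bs hnat x i] at this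
      have := (annSeries m 1).smul_mem (bs.repr x i)⁻¹ this
      rwa [smul_smul, inv_mul_cancel₀ h, one_smul] at this
  · rw [Submodule.span_le]
    rintro _ ⟨i, hi, rfl⟩
    rw [SetLike.mem_coe]
    rw [show annSeries m 2 = annOver m (annSeries m 1) from rfl, mem_annOver']
    intro y
    have key : m (bs i) y ∈ annSeries m 1 := by
      rw [hcomm, mul_basis_eq m bs hnat y i]
      exact (annSeries m 1).smul_mem _ hi
    exact ⟨key, by rwa [hcomm]⟩
end

section
/- Let U be a finite-dimensional vector space over a field F of characteristic ≠ 2 with a nondegenerate symmetric bilinear form b. Define E(U,b) = U × F with multiplication (u,α)(v,β) = (0, b(u,v)). Then E(U,b) is a nilpotent evolution algebra with Ann(E) = 0 × F and Ann²(E) = E. -/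
variable {F A : Type*} [Field F] [AddCommGroup A] [Module F A]

variable {F U : Type*} [Field F] [AddCommGroup U] [Module F U]

/-- Multiplication of `E(U,b) = U × F`: `(u,α)(v,β) = (0, b(u,v))`. -/
noncomputable def mulP (b : U →ₗ[F] U →ₗ[F] F) :
    (U × F) →ₗ[F] (U × F) →ₗ[F] (U × F) :=
  LinearMap.mk₂ F (fun p q => (0, b p.1 q.1))
    (fun p p' q => by simp [Prod.ext_iff])
    (fun c p q => by simp [Prod.ext_iff])
    (fun p q q' => by simp [Prod.ext_iff])
    (fun c p q => by simp [Prod.ext_iff])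

/-- Multiplication of `E(U,b,g) = U × F × F`. -/
noncomputable def mulT (b : U →ₗ[F] U →ₗ[F] F) (g : U →ₗ[F] U) :
    (U × F × F) →ₗ[F] (U × F × F) →ₗ[F] (U × F × F) :=
  LinearMap.mk₂ F (fun p q => (0, b p.1 q.1, b (g p.1) q.1 + p.2.1 * q.2.1))
    (fun p p' q => by simp [Prod.ext_iff, add_mul]; ring)
    (fun c p q => by simp [Prod.ext_iff, smul_eq_mul]; ring)
    (fun p q q' => by simp [Prod.ext_iff, mul_add]; ring)
    (fun c p q => by simp [Prod.ext_iff, smul_eq_mul]; ring)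

/-- Multiplication of `E(U,b,u) = F × U × F`: `(α,x,β)(γ,y,δ) = (0, αγ·u, b(x,y))`. -/
noncomputable def mulG (b : U →ₗ[F] U →ₗ[F] F) (u : U) :
    (F × U × F) →ₗ[F] (F × U × F) →ₗ[F] (F × U × F) :=
  LinearMap.mk₂ F (fun p q => (0, (p.1 * q.1) • u, b p.2.1 q.2.1))
    (fun p p' q => by simp [Prod.ext_iff, add_mul, add_smul])
    (fun c p q => by simp [Prod.ext_iff, smul_eq_mul, mul_assoc, smul_smul])
    (fun p q q' => by simp [Prod.ext_iff, mul_add, add_smul])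
    (fun c p q => by simp [Prod.ext_iff, smul_eq_mul, smul_smul, mul_left_comm])

/-- Multiplication of `E(U,b,f,g) = U × F × F × F`. -/
noncomputable def mulQ (b : U →ₗ[F] U →ₗ[F] F) (f g : U →ₗ[F] U) :
    (U × F × F × F) →ₗ[F] (U × F × F × F) →ₗ[F] (U × F × F × F) :=
  LinearMap.mk₂ F (fun p q =>
      (0, b p.1 q.1, b (f p.1) q.1 + p.2.1 * q.2.1, b (g p.1) q.1 + p.2.2.1 * q.2.2.1))
    (fun p p' q => by simp [Prod.ext_iff, add_mul]; constructor <;> ring)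
    (fun c p q => by simp [Prod.ext_iff, smul_eq_mul]; constructor <;> ring)
    (fun p q q' => by simp [Prod.ext_iff, mul_add]; constructor <;> ring)
    (fun c p q => by simp [Prod.ext_iff, smul_eq_mul]; constructor <;> ring)


/-- `E(U,b)` is a nilpotent evolution algebra with `Ann(E) = 0 × F` and `Ann²(E) = E`. -/
theorem stmt7 {F U : Type*} [Field F] (hchar : (2 : F) ≠ 0)
    [AddCommGroup U] [Module F U] [FiniteDimensional F U]
    (hU : 1 ≤ Module.finrank F U)
    (b : U →ₗ[F] U →ₗ[F] F)
    (hsymm : ∀ x y, b x y = b y x)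
    (hnd : ∀ x, (∀ y, b x y = 0) → x = 0) :
    IsEvolutionAlg (mulP b) ∧ IsNilpotentAlg (mulP b) ∧
      annA (mulP b) = Submodule.prod (⊥ : Submodule F U) (⊤ : Submodule F F) ∧
      annSeries (mulP b) 2 = ⊤ := by
  
  haveI : Invertible (2 : F) := invertibleOfNonzero hchar
  -- key: products lie in 0 × ⊤, and product with something of first coord 0 is 0
  have key : ∀ p q : U × F, mulP b p q = (0, b p.1 q.1) := fun p q => rfl
  have hann : annA (mulP b) = Submodule.prod (⊥ : Submodule F U) (⊤ : Submodule F F) := by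
    ext x
    constructor
    · intro hx
      have h1 : ∀ y : U × F, mulP b x y = 0 := by
        intro y; simpa [annA, annOver] using (hx y).1
      have : x.1 = 0 := by
        apply hnd
        intro y
        have := h1 (y, 0)
        rw [key] at this
        exact congrArg Prod.snd this
      simp [Submodule.mem_prod, this]
    · intro hx
      have h1 : x.1 = 0 := by simpa [Submodule.mem_prod] using hx.1
      intro y
      constructor <;> simp [key, h1, hsymm x.1]
  refine ⟨?_, ?_, hann, ?_⟩
  · refine ⟨fun x y => by simp [key, hsymm], ?_⟩
    obtain ⟨v, hv⟩ := LinearMap.BilinForm.exists_orthogonal_basis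
      (B := b) ⟨fun x y => hsymm x y⟩
    refine ⟨Fin (Module.finrank F U) ⊕ Unit, inferInstance,
      v.prod (Module.Basis.singleton Unit F), ?_⟩
    have hfst : ∀ i : Fin (Module.finrank F U) ⊕ Unit,
        ((v.prod (Module.Basis.singleton Unit F)) i).1 =
          Sum.elim v (fun _ => (0 : U)) i := by
      rintro (i | i)
      · exact Module.Basis.prod_apply_inl_fst v _ i
      · exact Module.Basis.prod_apply_inr_fst v _ i
    rintro (i | i) (j | j) hij <;>
      rw [key, Prod.mk.injEq] <;> refine ⟨rfl, ?_⟩ <;> simp only [hfst]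
    · exact hv (fun h => hij (by rw [h]))
    · simp
    · simp
    · simp
  · refine ⟨2, ?_⟩
    have h1 : apow (mulP b) 1 ≤ Submodule.prod (⊥ : Submodule F U) (⊤ : Submodule F F) := by
      rw [show apow (mulP b) 1 = ⨆ i : Fin 1, mulSub (mulP b) (apow (mulP b) i.1)
          (apow (mulP b) (0 - i.1)) from by rw [apow]]
      apply iSup_le
      intro i
      apply Submodule.span_le.2
      rintro z ⟨x, -, y, -, rfl⟩
      simp [key, Submodule.mem_prod]
    have : apow (mulP b) 2 = ⨆ i : Fin 2, mulSub (mulP b) (apow (mulP b) i.1)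
        (apow (mulP b) (1 - i.1)) := by rw [apow]
    rw [this]
    apply le_bot_iff.1
    apply iSup_le
    intro i
    apply Submodule.span_le.2
    rintro z ⟨x, hx, y, hy, rfl⟩
    have : x.1 = 0 ∨ y.1 = 0 := by
      fin_cases i
      · right
        exact (Submodule.mem_prod.1 (h1 hy)).1
      · left
        exact (Submodule.mem_prod.1 (h1 hx)).1
    simp only [SetLike.mem_coe, Submodule.mem_bot]
    rcases this with h | h <;> simp [key, h, hsymm x.1]
  · have h1 : annSeries (mulP b) 1 = annA (mulP b) := rfl
    rw [show annSeries (mulP b) 2 = annOver (mulP b) (annSeries (mulP b) 1) from rfl,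
      h1, hann]
    ext x
    simp only [Submodule.mem_top, iff_true]
    intro y
    constructor <;> simp [annOver, key, Submodule.mem_prod]
end

section
/- Let U be a finite-dimensional vector space over a field F of characteristic ≠ 2, b a nondegenerate symmetric bilinear form on U, and g : U → U a b-symmetric diagonalizable endomorphism. Define E(U,b,g) = U × F × F with multiplication (u,α,β)(v,γ,δ) = (0, b(u,v), b(g(u),v) + αγ). Then E(U,b,g) is a nilpotent evolution algebra with Ann(E) = 0×0×F, Ann²(E) = 0×F×F, and Ann³(E) = E. -/
variable {F A : Type*} [Field F] [AddCommGroup A] [Module F A]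

variable {F U : Type*} [Field F] [AddCommGroup U] [Module F U]

section Aux

theorem key_mulSub_le {F A : Type*} [Field F] [AddCommGroup A] [Module F A]
    (m : Mul2 F A) {I J N : Submodule F A}
    (h : ∀ x ∈ I, ∀ y ∈ J, m x y ∈ N) : mulSub m I J ≤ N := by
  rw [mulSub, Submodule.span_le]
  rintro z ⟨x, hx, y, hy, rfl⟩
  exact h x hx y hy

theorem key_aux {F : Type*} [Field F] (hchar : (2:F) ≠ 0) :
    ∀ (n : ℕ) (U : Type v) [AddCommGroup U] [Module F U] [FiniteDimensional F U],
      Module.finrank F U = n →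
      ∀ (b : U →ₗ[F] U →ₗ[F] F), (∀ x y, b x y = b y x) →
      (∀ x, (∀ y, b x y = 0) → x = 0) →
      ∀ (g : U →ₗ[F] U), (∀ x y, b (g x) y = b x (g y)) →
      Submodule.span F {x | ∃ μ : F, g x = μ • x} = ⊤ →
      ∃ (v : Module.Basis (Fin n) F U) (μ : Fin n → F),
        (∀ i j, i ≠ j → b (v i) (v j) = 0) ∧ ∀ i, g (v i) = μ i • v i := by
  intro n
  induction n with
  | zero =>
    intro U _ _ _ hrank b hsymm hnd g hgsym hspan
    have : Subsingleton U := Module.finrank_zero_iff.mp hrank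
    exact ⟨Module.Basis.empty U, fun _ => 0, fun i => absurd i.2 (by simp), fun i => absurd i.2 (by simp)⟩
  | succ n ih =>
    intro U _ _ _ hrank b hsymm hnd g hgsym hspan
    set P : Set U := {x | ∃ μ : F, g x = μ • x} with hP
    -- Step 1: there is an eigenvector w with b w w ≠ 0
    have hw : ∃ w ∈ P, b w w ≠ 0 := by
      by_contra h
      push_neg at h
      have hpair : ∀ x ∈ P, ∀ y ∈ P, b x y = 0 := by
        rintro x ⟨μ, hx⟩ y ⟨ν, hy⟩
        by_cases hμν : μ = ν
        · subst hμν
          have h0 := h _ (⟨μ, by simp [hx, hy, smul_add]⟩ : x + y ∈ P)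
          have hx0 := h _ (⟨μ, hx⟩ : x ∈ P)
          have hy0 := h _ (⟨μ, hy⟩ : y ∈ P)
          have hyx : b y x = b x y := hsymm y x
          have h2 : (2 : F) * b x y = 0 := by
            simp only [map_add, LinearMap.add_apply] at h0
            rw [hx0, hy0, hyx] at h0
            linear_combination h0
          exact (mul_eq_zero.mp h2).resolve_left hchar
        · have e1 : b (g x) y = μ * b x y := by rw [hx]; simp
          have e2 : b x (g y) = ν * b x y := by
            rw [hy, hsymm x (ν • y)]; simp [hsymm y x]
          have h2 : (μ - ν) * b x y = 0 := by
            have := hgsym x y; rw [e1, e2] at this; linear_combination this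
          exact (mul_eq_zero.mp h2).resolve_left (sub_ne_zero.mpr hμν)
      have hb0 : b = 0 := by
        apply LinearMap.ext_on hspan
        intro x hx
        apply LinearMap.ext_on hspan
        intro y hy
        simpa using hpair x hx y hy
      have hnt : Nontrivial U := by
        rw [← Module.finrank_pos_iff (R := F)]; omega
      obtain ⟨x, y, hxy⟩ := hnt
      have hz : ∀ z : U, z = 0 := fun z => hnd z (by simp [hb0])
      exact hxy (by rw [hz x, hz y])
    obtain ⟨w, ⟨ν, hwe⟩, hww⟩ := hw
    -- the orthogonal complement of w
    set W : Submodule F U := LinearMap.ker (b w) with hWdef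
    have hmemW : ∀ x : U, x ∈ W ↔ b w x = 0 := fun x => LinearMap.mem_ker
    -- the projection onto W
    set π : U →ₗ[F] U :=
      LinearMap.id - (b w w)⁻¹ • ((LinearMap.toSpanSingleton F U w).comp (b w)) with hπ
    have hπapp : ∀ x, π x = x - ((b w w)⁻¹ * b w x) • w := by
      intro x
      simp [hπ, LinearMap.toSpanSingleton, mul_smul]
    have hπW : ∀ x, π x ∈ W := by
      intro x
      rw [hmemW, hπapp]
      simp only [map_sub, map_smul, smul_eq_mul]
      field_simp
      simp
    have hπfix : ∀ x ∈ W, π x = x := by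
      intro x hx
      rw [hmemW] at hx
      rw [hπapp, hx]
      simp
    have hπP : ∀ x ∈ P, π x ∈ P := by
      rintro x ⟨μ, hx⟩
      by_cases hμν : μ = ν
      · subst hμν
        refine ⟨μ, ?_⟩
        rw [hπapp]
        simp [hx, hwe, smul_sub, smul_smul, mul_comm]
      · have hbw : b w x = 0 := by
          have e1 : b (g w) x = ν * b w x := by rw [hwe]; simp
          have e2 : b w (g x) = μ * b w x := by
            rw [hx, hsymm w (μ • x)]; simp [hsymm x w]
          have h2 : (ν - μ) * b w x = 0 := by
            have := hgsym w x; rw [e1, e2] at this; linear_combination this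
          exact (mul_eq_zero.mp h2).resolve_left
            (sub_ne_zero.mpr (fun h => hμν h.symm))
        refine ⟨μ, ?_⟩
        rw [hπapp, hbw]
        simpa using hx
    -- W is g-invariant
    have hgW : ∀ x ∈ W, g x ∈ W := by
      intro x hx
      rw [hmemW] at hx ⊢
      rw [← hgsym w x, hwe]
      simp [hx]
    -- W has dimension n
    have hrankW : Module.finrank F ↥W = n := by
      have hsurj : Function.Surjective (b w) := by
        intro d
        exact ⟨(d * (b w w)⁻¹) • w, by rw [map_smul, smul_eq_mul, mul_assoc, inv_mul_cancel₀ hww, mul_one]⟩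
      have := LinearMap.finrank_range_add_finrank_ker (b w)
      rw [LinearMap.range_eq_top.mpr hsurj, finrank_top, Module.finrank_self, hrank] at this
      rw [hWdef]
      omega
    -- restricted structures
    set bW : ↥W →ₗ[F] ↥W →ₗ[F] F := b.compl₁₂ W.subtype W.subtype with hbW
    have hbWapp : ∀ x y : ↥W, bW x y = b ↑x ↑y := fun x y => rfl
    set gW : ↥W →ₗ[F] ↥W := g.restrict hgW with hgWdef
    have hgWapp : ∀ x : ↥W, (gW x : U) = g ↑x := fun x => rfl
    -- decomposition: every x is c•w + π x
    have hdecomp : ∀ x : U, x = ((b w w)⁻¹ * b w x) • w + π x := by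
      intro x; rw [hπapp]; abel
    -- nondegeneracy of bW
    have hndW : ∀ x : ↥W, (∀ y : ↥W, bW x y = 0) → x = 0 := by
      intro x hx
      have hxW : b w ↑x = 0 := (hmemW _).mp x.2
      have : (x : U) = 0 := by
        apply hnd
        intro y
        have := hx ⟨π y, hπW y⟩
        rw [hbWapp] at this
        calc b ↑x y = b ↑x (((b w w)⁻¹ * b w y) • w + π y) := by rw [← hdecomp]
          _ = ((b w w)⁻¹ * b w y) * b ↑x w + b ↑x (π y) := by simp
          _ = 0 := by rw [this, hsymm (↑x) w, hxW]; ring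
      exact Subtype.ext this
    -- eigen-spanning for gW
    have hspanW : Submodule.span F {x : ↥W | ∃ μ : F, gW x = μ • x} = ⊤ := by
      rw [eq_top_iff]
      rintro x -
      set T : Set ↥W := {x : ↥W | ∃ μ : F, gW x = μ • x} with hT
      have himg : W.subtype '' T = P ∩ ↑W := by
        ext z
        constructor
        · rintro ⟨y, ⟨μ, hy⟩, rfl⟩
          have : g ↑y = μ • (y : U) := by
            have := congrArg (W.subtype) hy
            simpa [hgWapp] using this
          exact ⟨⟨μ, this⟩, y.2⟩
        · rintro ⟨⟨μ, hz⟩, hzW⟩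
          refine ⟨⟨z, hzW⟩, ⟨μ, ?_⟩, rfl⟩
          apply Subtype.ext
          simpa [hgWapp] using hz
      have hx1 : (x : U) ∈ Submodule.span F (P ∩ ↑W) := by
        have h1 : (x : U) ∈ Submodule.map π (Submodule.span F P) := by
          rw [hspan]
          exact ⟨↑x, trivial, hπfix ↑x x.2⟩
        rw [Submodule.map_span] at h1
        refine Submodule.span_mono ?_ h1
        rintro z ⟨y, hy, rfl⟩
        exact ⟨hπP y hy, hπW y⟩
      rw [← himg, Submodule.span_image] at hx1
      obtain ⟨y, hy, hyx⟩ := hx1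
      have : y = x := Subtype.ext hyx
      exact this ▸ hy
    -- apply IH
    have hgWsym : ∀ x y : ↥W, bW (gW x) y = bW x (gW y) := by
      intro x y
      rw [hbWapp, hbWapp, hgWapp, hgWapp]  -- might not rewrite; use show
      exact hgsym ↑x ↑y
    obtain ⟨v', μ', horth', heig'⟩ := ih ↥W hrankW bW
      (fun x y => hsymm ↑x ↑y) hndW gW hgWsym hspanW
    -- build the new basis
    set v : Fin (n+1) → U := Fin.cons w (fun i => ↑(v' i)) with hv
    have hWspan : Submodule.span F (Set.range fun i => (v' i : U)) = W := by
      have h1 := congrArg (Submodule.map W.subtype) v'.span_eq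
      rw [Submodule.map_span, Submodule.map_top, Submodule.range_subtype] at h1
      have h2 : (Set.range fun i => (v' i : U)) = ⇑W.subtype '' Set.range ⇑v' := by
        ext z
        simp
      rw [h2, h1]
    have hli : LinearIndependent F v := by
      apply LinearIndependent.fin_cons
      · exact (v'.linearIndependent.map' W.subtype (Submodule.ker_subtype W))
      · rw [hWspan]
        intro hwW
        exact hww ((hmemW w).mp hwW)
    have hspanv : Submodule.span F (Set.range v) = ⊤ := by
      rw [eq_top_iff]
      rintro x -
      rw [hdecomp x]
      apply Submodule.add_mem
      · exact Submodule.smul_mem _ _ (Submodule.subset_span ⟨0, by simp [hv]⟩)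
      · have : π x ∈ W := hπW x
        rw [← hWspan] at this
        refine Submodule.span_mono ?_ this
        rintro z ⟨i, rfl⟩
        exact ⟨i.succ, by simp [hv]⟩
    refine ⟨Module.Basis.mk hli (le_of_eq hspanv.symm), Fin.cons ν μ', ?_, ?_⟩
    · intro i j hij
      rw [Module.Basis.coe_mk]
      rcases Fin.eq_zero_or_eq_succ i with rfl | ⟨i', rfl⟩
      · rcases Fin.eq_zero_or_eq_succ j with rfl | ⟨j', rfl⟩
        · exact absurd rfl hij
        · simp only [hv, Fin.cons_zero, Fin.cons_succ]
          exact (hmemW _).mp (v' j').2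
      · rcases Fin.eq_zero_or_eq_succ j with rfl | ⟨j', rfl⟩
        · simp only [hv, Fin.cons_zero, Fin.cons_succ]
          rw [hsymm]
          exact (hmemW _).mp (v' i').2
        · simp only [hv, Fin.cons_succ]
          have hij' : i' ≠ j' := fun h => hij (by rw [h])
          exact horth' i' j' hij'
    · intro i
      rw [Module.Basis.coe_mk]
      rcases Fin.eq_zero_or_eq_succ i with rfl | ⟨i', rfl⟩
      · simpa [hv] using hwe
      · simp only [hv, Fin.cons_succ]
        have h1 := congrArg (Submodule.subtype W) (heig' i')
        simp only [map_smul, Submodule.coe_subtype] at h1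
        rw [← hgWapp]
        exact h1

end Aux

/-- `E(U,b,g)` is a nilpotent evolution algebra with
`Ann(E) = 0×0×F`, `Ann²(E) = 0×F×F` and `Ann³(E) = E`. -/
theorem stmt9 {F U : Type*} [Field F] (hchar : (2 : F) ≠ 0)
    [AddCommGroup U] [Module F U] [FiniteDimensional F U]
    (hU : 1 ≤ Module.finrank F U)
    (b : U →ₗ[F] U →ₗ[F] F)
    (hsymm : ∀ x y, b x y = b y x)
    (hnd : ∀ x, (∀ y, b x y = 0) → x = 0)
    (g : U →ₗ[F] U)
    (hgsym : ∀ x y, b (g x) y = b x (g y))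
    (hgdiag : ∃ (ι : Type) (_ : Fintype ι) (v : Module.Basis ι F U) (μ : ι → F),
      ∀ i, g (v i) = μ i • v i) :
    IsEvolutionAlg (mulT b g) ∧ IsNilpotentAlg (mulT b g) ∧
      annSeries (mulT b g) 1 =
        Submodule.prod (⊥ : Submodule F U)
          (Submodule.prod (⊥ : Submodule F F) (⊤ : Submodule F F)) ∧
      annSeries (mulT b g) 2 =
        Submodule.prod (⊥ : Submodule F U) (⊤ : Submodule F (F × F)) ∧
      annSeries (mulT b g) 3 = ⊤ := by
  classical
  set m := mulT b g with hm
  have hmul : ∀ p q : U × F × F, m p q = (0, b p.1 q.1, b (g p.1) q.1 + p.2.1 * q.2.1) :=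
    fun p q => rfl
  have hcomm : ∀ x y : U × F × F, m x y = m y x := by
    intro x y
    have h1 : b x.1 y.1 = b y.1 x.1 := hsymm x.1 y.1
    have h2 : b (g x.1) y.1 + x.2.1 * y.2.1 = b (g y.1) x.1 + y.2.1 * x.2.1 := by
      rw [hgsym x.1 y.1, hsymm x.1 (g y.1), mul_comm]
    rw [hmul, hmul, h1, h2]
  -- the span hypothesis
  have hspan : Submodule.span F {x : U | ∃ μ : F, g x = μ • x} = ⊤ := by
    obtain ⟨ι, _, vb, μb, hvb⟩ := hgdiag
    rw [eq_top_iff, ← vb.span_eq]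
    apply Submodule.span_mono
    rintro x ⟨i, rfl⟩
    exact ⟨μb i, hvb i⟩
  obtain ⟨v, μ, horth, heig⟩ :=
    key_aux hchar (Module.finrank F U) U rfl b hsymm hnd g hgsym hspan
  -- the natural basis
  set e1 : Module.Basis Unit F F := Module.Basis.singleton Unit F with he1
  set bs : Module.Basis ((Fin (Module.finrank F U)) ⊕ (Unit ⊕ Unit)) F (U × F × F) :=
    v.prod (e1.prod e1) with hbs
  have hbs_inl : ∀ i, bs (Sum.inl i) = (v i, 0, 0) := by
    intro i; simp [hbs, Module.Basis.prod_apply, Prod.ext_iff]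
  have hbs_inr1 : ∀ u, bs (Sum.inr (Sum.inl u)) = (0, 1, 0) := by
    intro u; simp [hbs, he1, Module.Basis.prod_apply, Prod.ext_iff]
  have hbs_inr2 : ∀ u, bs (Sum.inr (Sum.inr u)) = (0, 0, 1) := by
    intro u; simp [hbs, he1, Module.Basis.prod_apply, Prod.ext_iff]
  have hnat : NaturalBasis m bs := by
    intro i j hij
    rcases i with i | iu <;> rcases j with j | ju
    · have hij' : i ≠ j := by simpa using hij
      rw [hbs_inl, hbs_inl, hmul]
      have h1 : b (v i) (v j) = 0 := horth i j hij'
      have h2 : b (g (v i)) (v j) = 0 := by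
        rw [heig i, map_smul]
        simp [h1]
      simp [h1, h2, Prod.ext_iff]
    · rcases ju with ju | ju
      · rw [hbs_inl, hbs_inr1, hmul]; simp [Prod.ext_iff]
      · rw [hbs_inl, hbs_inr2, hmul]; simp [Prod.ext_iff]
    · rcases iu with iu | iu
      · rw [hbs_inr1, hbs_inl, hmul]; simp [Prod.ext_iff]
      · rw [hbs_inr2, hbs_inl, hmul]; simp [Prod.ext_iff]
    · rcases iu with iu | iu <;> rcases ju with ju | ju
      · exact absurd rfl hij
      · rw [hbs_inr1, hbs_inr2, hmul]; simp [Prod.ext_iff]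
      · rw [hbs_inr2, hbs_inr1, hmul]; simp [Prod.ext_iff]
      · exact absurd rfl hij
  -- the two distinguished submodules
  set S1 : Submodule F (U × F × F) :=
    Submodule.prod (⊥ : Submodule F U) (⊤ : Submodule F (F × F)) with hS1
  set S0 : Submodule F (U × F × F) :=
    Submodule.prod (⊥ : Submodule F U)
      (Submodule.prod (⊥ : Submodule F F) (⊤ : Submodule F F)) with hS0
  have hmemS1 : ∀ x : U × F × F, x ∈ S1 ↔ x.1 = 0 := by
    intro x; simp [hS1, Submodule.mem_prod]
  have hmemS0 : ∀ x : U × F × F, x ∈ S0 ↔ x.1 = 0 ∧ x.2.1 = 0 := by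
    intro x; simp only [hS0, Submodule.mem_prod, Submodule.mem_bot, Submodule.mem_top, and_true]
  have hL1 : ∀ x y : U × F × F, m x y ∈ S1 := by
    intro x y; rw [hmemS1, hmul]
  have hL2a : ∀ x y : U × F × F, x ∈ S1 → m x y ∈ S0 := by
    intro x y hx
    rw [hmemS1] at hx
    rw [hmemS0, hmul]
    simp [hx]
  have hL2b : ∀ x y : U × F × F, y ∈ S1 → m x y ∈ S0 := by
    intro x y hy
    rw [hmemS1] at hy
    rw [hmemS0, hmul]
    simp [hy]
  have hL0 : ∀ x : U × F × F, x ∈ S0 → ∀ y, m x y = 0 ∧ m y x = 0 := by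
    intro x hx y
    rw [hmemS0] at hx
    constructor <;> rw [hmul] <;> simp [hx.1, hx.2, Prod.ext_iff]
  -- nilpotency
  have hap1 : apow m 1 ≤ S1 := by
    rw [apow]
    apply iSup_le
    intro i
    exact key_mulSub_le m (fun x _ y _ => hL1 x y)
  have hap2 : apow m 2 ≤ S0 := by
    rw [apow]
    apply iSup_le
    rintro ⟨i, hi⟩
    interval_cases i
    · exact key_mulSub_le m (fun x _ y hy => hL2b x y (hap1 hy))
    · exact key_mulSub_le m (fun x hx y _ => hL2a x y (hap1 hx))
  have hap3 : apow m 3 ≤ S0 := by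
    rw [apow]
    apply iSup_le
    rintro ⟨i, hi⟩
    interval_cases i
    · exact key_mulSub_le m (fun x _ y hy => by
        rw [(hL0 y (hap2 hy) x).2]; exact S0.zero_mem)
    · exact key_mulSub_le m (fun x hx y _ => hL2a x y (hap1 hx))
    · exact key_mulSub_le m (fun x hx y _ => by
        rw [(hL0 x (hap2 hx) y).1]; exact S0.zero_mem)
  have hap4 : apow m 4 ≤ ⊥ := by
    rw [apow]
    apply iSup_le
    rintro ⟨i, hi⟩
    interval_cases i
    · exact key_mulSub_le m (fun x _ y hy => by
        rw [(hL0 y (hap3 hy) x).2]; exact Submodule.zero_mem ⊥)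
    · exact key_mulSub_le m (fun x _ y hy => by
        rw [(hL0 y (hap2 hy) x).2]; exact Submodule.zero_mem ⊥)
    · exact key_mulSub_le m (fun x hx y _ => by
        rw [(hL0 x (hap2 hx) y).1]; exact Submodule.zero_mem ⊥)
    · exact key_mulSub_le m (fun x hx y _ => by
        rw [(hL0 x (hap3 hx) y).1]; exact Submodule.zero_mem ⊥)
  -- annihilator series
  have hmemAnn : ∀ (N : Submodule F (U × F × F)) (x : U × F × F),
      x ∈ annOver m N ↔ ∀ y, m x y ∈ N ∧ m y x ∈ N := fun N x => Iff.rfl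
  have ha1 : annSeries m 1 = S0 := by
    ext x
    rw [show annSeries m 1 = annOver m ⊥ from rfl, hmemAnn, hmemS0]
    constructor
    · intro h
      constructor
      · apply hnd
        intro y
        have h1 := (h (y, 0, 0)).1
        rw [Submodule.mem_bot, hmul] at h1
        have := congrArg (fun p : U × F × F => p.2.1) h1
        simpa using this
      · have h2 := (h (0, 1, 0)).1
        rw [Submodule.mem_bot, hmul] at h2
        have := congrArg (fun p : U × F × F => p.2.2) h2
        simpa using this
    · rintro ⟨hx1, hx2⟩ y
      constructor <;> rw [Submodule.mem_bot, hmul] <;>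
        simp [hx1, hx2, Prod.ext_iff]
  have ha2 : annSeries m 2 = S1 := by
    have : annSeries m 2 = annOver m (annSeries m 1) := rfl
    rw [this, ha1]
    ext x
    rw [hmemAnn, hmemS1]
    constructor
    · intro h
      apply hnd
      intro y
      have h1 := (h (y, 0, 0)).1
      rw [hmemS0, hmul] at h1
      exact h1.2
    · intro hx1 y
      constructor <;> rw [hmemS0, hmul] <;> simp [hx1]
  have ha3 : annSeries m 3 = ⊤ := by
    have : annSeries m 3 = annOver m (annSeries m 2) := rfl
    rw [this, ha2, eq_top_iff]
    rintro x -
    rw [hmemAnn]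
    intro y
    constructor <;> rw [hmemS1, hmul]
  exact ⟨⟨hcomm, _, inferInstance, bs, hnat⟩, ⟨4, le_bot_iff.mp hap4⟩, ha1, ha2, ha3⟩
end

section
/- Let U be a finite-dimensional vector space over a field F of characteristic ≠ 2, b a nondegenerate symmetric bilinear form on U, and u a nonzero element of U. Define E(U,b,u) = F × U × F with multiplication (α,x,β)(γ,y,δ) = (0, αγ·u, b(x,y)). Then E(U,b,u) is a nilpotent evolution algebra with Ann(E) = 0×0×F, Ann²(E) = 0×U×F, and Ann³(E) = E. -/
variable {F A : Type*} [Field F] [AddCommGroup A] [Module F A]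

variable {F U : Type*} [Field F] [AddCommGroup U] [Module F U]

section stmt10aux

variable {F U : Type*} [Field F] [AddCommGroup U] [Module F U]

lemma mem_annOver_iff {A : Type*} [AddCommGroup A] [Module F A] {m : Mul2 F A}
    {N : Submodule F A} {x : A} :
    x ∈ annOver m N ↔ ∀ y, m x y ∈ N ∧ m y x ∈ N := Iff.rfl

lemma mulSub_le_of {A : Type*} [AddCommGroup A] [Module F A] {m : Mul2 F A}
    {I J N : Submodule F A} (h : ∀ x ∈ I, ∀ y ∈ J, m x y ∈ N) : mulSub m I J ≤ N := by
  rw [mulSub, Submodule.span_le]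
  rintro z ⟨x, hx, y, hy, rfl⟩
  exact h x hx y hy

lemma apow_succ_eq {A : Type*} [AddCommGroup A] [Module F A] (m : Mul2 F A) (k : ℕ) :
    apow m (k+1) = ⨆ i : Fin (k+1), mulSub m (apow m i.1) (apow m (k - i.1)) := by
  rw [apow]

lemma mulG_app (b : U →ₗ[F] U →ₗ[F] F) (u : U) (p q : F × U × F) :
    mulG b u p q = (0, (p.1 * q.1) • u, b p.2.1 q.2.1) := rfl

end stmt10aux

/-- `E(U,b,u)` is a nilpotent evolution algebra with
`Ann(E) = 0×0×F`, `Ann²(E) = 0×U×F` and `Ann³(E) = E`. -/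
theorem stmt10 {F U : Type*} [Field F] (hchar : (2 : F) ≠ 0)
    [AddCommGroup U] [Module F U] [FiniteDimensional F U]
    (hU : 1 ≤ Module.finrank F U)
    (b : U →ₗ[F] U →ₗ[F] F)
    (hsymm : ∀ x y, b x y = b y x)
    (hnd : ∀ x, (∀ y, b x y = 0) → x = 0)
    (u : U) (hu : u ≠ 0) :
    IsEvolutionAlg (mulG b u) ∧ IsNilpotentAlg (mulG b u) ∧
      annSeries (mulG b u) 1 =
        Submodule.prod (⊥ : Submodule F F)
          (Submodule.prod (⊥ : Submodule F U) (⊤ : Submodule F F)) ∧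
      annSeries (mulG b u) 2 =
        Submodule.prod (⊥ : Submodule F F)
          (Submodule.prod (⊤ : Submodule F U) (⊤ : Submodule F F)) ∧
      annSeries (mulG b u) 3 = ⊤ := by
  classical
  set m := mulG b u with hm
  have happ : ∀ p q : F × U × F, m p q = (0, (p.1 * q.1) • u, b p.2.1 q.2.1) :=
    fun p q => rfl
  -- commutativity
  have hcomm : ∀ p q : F × U × F, m p q = m q p := by
    intro p q
    rw [happ, happ, mul_comm, hsymm]
  -- key vanishing facts
  have hzero_left : ∀ p q : F × U × F, p.1 = 0 → p.2.1 = 0 → m p q = 0 := by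
    intro p q h1 h2
    rw [happ, h1, h2]
    simp
  have hzero_right : ∀ p q : F × U × F, q.1 = 0 → q.2.1 = 0 → m p q = 0 := by
    intro p q h1 h2
    rw [hcomm]; exact hzero_left q p h1 h2
  set S2 : Submodule F (F × U × F) :=
    Submodule.prod (⊥ : Submodule F F) (⊤ : Submodule F (U × F)) with hS2
  set S3 : Submodule F (F × U × F) :=
    Submodule.prod (⊥ : Submodule F F)
      (Submodule.prod (⊥ : Submodule F U) (⊤ : Submodule F F)) with hS3
  have memS2 : ∀ p : F × U × F, p ∈ S2 ↔ p.1 = 0 := by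
    intro p; simp only [hS2, Submodule.mem_prod, Submodule.mem_bot, Submodule.mem_top, and_true]
  have memS3 : ∀ p : F × U × F, p ∈ S3 ↔ p.1 = 0 ∧ p.2.1 = 0 := by
    intro p; simp only [hS3, Submodule.mem_prod, Submodule.mem_bot, Submodule.mem_top, and_true]
  -- every product lies in S2
  have hprod_S2 : ∀ p q : F × U × F, m p q ∈ S2 := by
    intro p q; rw [memS2, happ]
  -- product with a factor whose first coordinate is zero lies in S3
  have hprod_S3 : ∀ p q : F × U × F, p.1 = 0 ∨ q.1 = 0 → m p q ∈ S3 := by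
    intro p q h
    rw [memS3, happ]
    rcases h with h | h <;> simp [h]
  have memA1 : ∀ q : F × U × F, q ∈ annSeries m 1 ↔ q.1 = 0 ∧ q.2.1 = 0 := by
    intro q
    have h1 : annSeries m 1 = annOver m ⊥ := rfl
    rw [h1, mem_annOver_iff]
    constructor
    · intro h
      have ha := (h (1, 0, 0)).1
      rw [happ] at ha
      simp only [Submodule.mem_bot, Prod.ext_iff] at ha
      have hq1 : q.1 = 0 := by
        by_contra hne
        exact hu (by simpa [hne] using ha.2.1)
      refine ⟨hq1, ?_⟩
      apply hnd
      intro y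
      have hb := (h (0, y, 0)).1
      rw [happ] at hb
      simp only [Submodule.mem_bot, Prod.ext_iff] at hb
      exact hb.2.2
    · rintro ⟨hq1, hq2⟩ y
      rw [Submodule.mem_bot, Submodule.mem_bot, hzero_left q y hq1 hq2,
        hzero_right y q hq1 hq2]
      exact ⟨rfl, rfl⟩
  have memA2 : ∀ q : F × U × F, q ∈ annSeries m 2 ↔ q.1 = 0 := by
    intro q
    have h2 : annSeries m 2 = annOver m (annSeries m 1) := rfl
    rw [h2, mem_annOver_iff]
    constructor
    · intro h
      have ha := (h (1, 0, 0)).1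
      rw [memA1, happ] at ha
      simp only [Prod.ext_iff] at ha
      by_contra hne
      exact hu (by simpa [hne] using ha.2)
    · intro hq1 y
      constructor
      · rw [memA1, happ]; simp [hq1]
      · rw [memA1, happ]; simp [hq1]
  refine ⟨⟨hcomm, ?_⟩, ?_, ?_, ?_, ?_⟩
  · -- natural basis
    have h2 : Invertible (2 : F) := invertibleOfNonzero hchar
    have hBsymm : LinearMap.IsSymm b := by
      refine ⟨fun x y => ?_⟩; simpa using hsymm x y
    obtain ⟨v, hv⟩ := LinearMap.BilinForm.exists_orthogonal_basis (B := b) ⟨hBsymm.eq⟩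
    refine ⟨Unit ⊕ (Fin (Module.finrank F U) ⊕ Unit), inferInstance,
      (Module.Basis.singleton Unit F).prod (v.prod (Module.Basis.singleton Unit F)), ?_⟩
    intro i j hij
    set bs := (Module.Basis.singleton Unit F).prod (v.prod (Module.Basis.singleton Unit F)) with hbs
    have hval : ∀ i, bs i = Sum.elim (fun _ : Unit => ((1 : F), (0 : U), (0 : F)))
        (Sum.elim (fun k => ((0 : F), v k, (0 : F)))
          (fun _ : Unit => ((0 : F), (0 : U), (1 : F)))) i := by
      rintro (⟨⟩ | (k | ⟨⟩)) <;>
        simp [hbs, Module.Basis.prod_apply, Module.Basis.singleton_apply, Prod.ext_iff]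
    rcases i with ⟨⟩ | (k | ⟨⟩) <;> rcases j with ⟨⟩ | (l | ⟨⟩)
    · exact (hij rfl).elim
    · simp only [hval, Sum.elim_inl, Sum.elim_inr]; rw [happ]; simp [Prod.ext_iff]
    · simp only [hval, Sum.elim_inl, Sum.elim_inr]; rw [happ]; simp [Prod.ext_iff]
    · simp only [hval, Sum.elim_inl, Sum.elim_inr]; rw [happ]; simp [Prod.ext_iff]
    · have hkl : k ≠ l := fun h => hij (by rw [h])
      have hb0 : b (v k) (v l) = 0 := hv hkl
      simp only [hval, Sum.elim_inl, Sum.elim_inr]; rw [happ]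
      simp [Prod.ext_iff, hb0]
    · simp only [hval, Sum.elim_inl, Sum.elim_inr]; rw [happ]; simp [Prod.ext_iff]
    · simp only [hval, Sum.elim_inl, Sum.elim_inr]; rw [happ]; simp [Prod.ext_iff]
    · simp only [hval, Sum.elim_inl, Sum.elim_inr]; rw [happ]; simp [Prod.ext_iff]
    · exact (hij rfl).elim
  · -- nilpotency
    have h1 : apow m 1 ≤ S2 := by
      rw [apow_succ_eq]
      exact iSup_le fun i => mulSub_le_of fun x _ y _ => hprod_S2 x y
    have h2 : apow m 2 ≤ S3 := by
      rw [apow_succ_eq]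
      apply iSup_le
      intro i
      rcases i with ⟨i, hi⟩
      interval_cases i
      · exact mulSub_le_of fun x _ y hy =>
          hprod_S3 x y (Or.inr ((memS2 y).1 (h1 hy)))
      · exact mulSub_le_of fun x hx y _ =>
          hprod_S3 x y (Or.inl ((memS2 x).1 (h1 hx)))
    have hS3mul : ∀ (x y : F × U × F), x ∈ S3 ∨ y ∈ S3 → m x y = 0 := by
      intro x y h
      rcases h with h | h
      · obtain ⟨ha, hb⟩ := (memS3 x).1 h
        exact hzero_left x y ha hb
      · obtain ⟨ha, hb⟩ := (memS3 y).1 h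
        exact hzero_right x y ha hb
    have h3 : apow m 3 ≤ S3 := by
      rw [apow_succ_eq]
      apply iSup_le
      intro i
      rcases i with ⟨i, hi⟩
      interval_cases i
      · exact mulSub_le_of fun x _ y hy => by
          rw [hS3mul x y (Or.inr (h2 hy))]; exact S3.zero_mem
      · exact mulSub_le_of fun x hx y hy =>
          hprod_S3 x y (Or.inl ((memS2 x).1 (h1 hx)))
      · exact mulSub_le_of fun x hx y _ => by
          rw [hS3mul x y (Or.inl (h2 hx))]; exact S3.zero_mem
    refine ⟨4, le_bot_iff.1 ?_⟩
    rw [apow_succ_eq]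
    apply iSup_le
    intro i
    rcases i with ⟨i, hi⟩
    interval_cases i
    · exact mulSub_le_of fun x _ y hy => by
        rw [hS3mul x y (Or.inr (h3 hy))]; exact Submodule.zero_mem ⊥
    · exact mulSub_le_of fun x _ y hy => by
        rw [hS3mul x y (Or.inr (h2 hy))]; exact Submodule.zero_mem ⊥
    · exact mulSub_le_of fun x hx y _ => by
        rw [hS3mul x y (Or.inl (h2 hx))]; exact Submodule.zero_mem ⊥
    · exact mulSub_le_of fun x hx y _ => by
        rw [hS3mul x y (Or.inl (h3 hx))]; exact Submodule.zero_mem ⊥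
  · -- Ann¹
    ext p
    rw [memA1, Submodule.mem_prod, Submodule.mem_prod]
    simp only [Submodule.mem_bot, Submodule.mem_top, and_true]
  · -- Ann²
    ext p
    rw [memA2, Submodule.mem_prod, Submodule.mem_prod]
    simp only [Submodule.mem_bot, Submodule.mem_top, and_true]
  · -- Ann³
    have he : annSeries m 3 = annOver m (annSeries m 2) := rfl
    rw [he, eq_top_iff]
    intro p _
    rw [mem_annOver_iff]
    intro y
    constructor
    · rw [memA2, happ]
    · rw [memA2, happ]
end

section
/- Let E(U,b,f,g) = U × F × F × F with product (u,α,β,γ)(v,ε,δ,η) = (0, b(u,v), b(f(u),v)+αε, b(g(u),v)+βδ), where f,g are commuting b-symmetric diagonalizable endomorphisms of U. Then for any α, β ∈ F with α ≠ 0, E(U,b,f,g) is isomorphic as an algebra to E(U, αb, αf, α³g + β·id). -/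
variable {F A : Type*} [Field F] [AddCommGroup A] [Module F A]

variable {F U : Type*} [Field F] [AddCommGroup U] [Module F U]

/-- `E(U,b,f,g)` is isomorphic to `E(U, αb, αf, α³g + β·id)` for `α ≠ 0`. -/
theorem stmt13 {F U : Type*} [Field F] (hchar : (2 : F) ≠ 0)
    [AddCommGroup U] [Module F U] [FiniteDimensional F U]
    (b : U →ₗ[F] U →ₗ[F] F)
    (hsymm : ∀ x y, b x y = b y x)
    (hnd : ∀ x, (∀ y, b x y = 0) → x = 0)
    (f g : U →ₗ[F] U)
    (hfg : f ∘ₗ g = g ∘ₗ f)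
    (hfsym : ∀ x y, b (f x) y = b x (f y))
    (hgsym : ∀ x y, b (g x) y = b x (g y))
    (hdiag : ∃ (ι : Type) (_ : Fintype ι) (v : Module.Basis ι F U) (μ ν : ι → F),
      (∀ i j, i ≠ j → b (v i) (v j) = 0) ∧
      (∀ i, f (v i) = μ i • v i) ∧ (∀ i, g (v i) = ν i • v i))
    (α β : F) (hα : α ≠ 0) :
    ∃ e : (U × F × F × F) ≃ₗ[F] (U × F × F × F),
      ∀ p q, e (mulQ b f g p q) =
        mulQ (α • b) (α • f) (α ^ 3 • g + β • LinearMap.id) (e p) (e q) := by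
  refine ⟨{ toFun := fun p => (p.1, α * p.2.1, α ^ 2 * p.2.2.1, α ^ 4 * p.2.2.2 + α * β * p.2.1)
            invFun := fun p => (p.1, α⁻¹ * p.2.1, (α ^ 2)⁻¹ * p.2.2.1,
              (α ^ 4)⁻¹ * p.2.2.2 - (α ^ 4)⁻¹ * β * α⁻¹ * α * p.2.1)
            map_add' := by intro p q; simp [Prod.ext_iff]; and_intros <;> first | trivial | ring
            map_smul' := by intro c p; simp [Prod.ext_iff, smul_eq_mul]; and_intros <;> first | trivial | ring
            left_inv := by
              intro p
              have h4 : (α : F) ^ 4 ≠ 0 := pow_ne_zero _ hα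
              have h2 : (α : F) ^ 2 ≠ 0 := pow_ne_zero _ hα
              simp [Prod.ext_iff]
              refine ⟨by field_simp, by field_simp, ?_⟩
              field_simp
              ring
            right_inv := by
              intro p
              have h4 : (α : F) ^ 4 ≠ 0 := pow_ne_zero _ hα
              have h2 : (α : F) ^ 2 ≠ 0 := pow_ne_zero _ hα
              simp [Prod.ext_iff]
              refine ⟨by field_simp, by field_simp, ?_⟩
              field_simp
              ring }, ?_⟩
  intro p q
  simp only [mulQ, LinearMap.mk₂_apply, Prod.ext_iff, smul_eq_mul, LinearMap.smul_apply,
    map_smul, LinearMap.add_apply, LinearMap.id_apply, LinearEquiv.coe_mk, LinearMap.coe_mk,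
    AddHom.coe_mk, map_add]
  and_intros <;> first | rfl | ring | trivial
end
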